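/- For every real t, the symmetric series ∑_{p=−∞}^{∞} sinc(t + p) converges to π. -/

import Mathlib

open Real hiding sinc
open MeasureTheory Filter intervalIntegral

noncomputable def sinc (t : ℝ) : ℝ := if t = 0 then 1 else Real.sin t / t

lemma sinc_eq_integral (x : ℝ) : sinc x = ∫ u in (0:ℝ)..1, Real.cos (x * u) := by
  rcases eq_or_ne x 0 with h | h
  · simp [sinc, h]
  · rw [sinc, if_neg h, intervalIntegral.integral_comp_mul_left _ h]
    simp [integral_cos, div_eq_inv_mul]

lemma tw (a b : ℝ) : Real.cos a * (2 * Real.sin b) = Real.sin (a + b) - Real.sin (a - b) := by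
  rw [Real.sin_add, Real.sin_sub]; ring

lemma kernel_mul (t u : ℝ) (N : ℕ) :
    (∑ p ∈ Finset.Icc (-(N:ℤ)) (N:ℤ), Real.cos ((t + p) * u)) * (2 * Real.sin (u/2))
      = Real.sin ((t + N + 1/2) * u) - Real.sin ((t - N - 1/2) * u) := by
  induction N with
  | zero =>
      simp only [Nat.cast_zero, neg_zero, Finset.Icc_self, Finset.sum_singleton,
        Int.cast_zero, add_zero]
      rw [tw]
      ring_nf
  | succ N ih =>
      have hset : Finset.Icc (-((N:ℤ)+1)) ((N:ℤ)+1)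
          = insert (-((N:ℤ)+1)) (insert ((N:ℤ)+1) (Finset.Icc (-(N:ℤ)) (N:ℤ))) := by
        ext x; simp only [Finset.mem_Icc, Finset.mem_insert]; omega
      push_cast
      rw [hset, Finset.sum_insert (by simp only [Finset.mem_insert, Finset.mem_Icc]; omega),
        Finset.sum_insert (by simp only [Finset.mem_Icc]; omega)]
      push_cast
      rw [add_mul, add_mul, add_mul, ih, tw, tw]
      ring_nf

lemma kernel (t u : ℝ) (N : ℕ) (hu : Real.sin (u/2) ≠ 0) :
    ∑ p ∈ Finset.Icc (-(N:ℤ)) (N:ℤ), Real.cos ((t + p) * u)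
      = Real.cos (t*u) * Real.sin (((N:ℝ) + 1/2) * u) / Real.sin (u/2) := by
  have h := kernel_mul t u N
  have h2 : Real.sin ((t + N + 1/2) * u) - Real.sin ((t - N - 1/2) * u)
      = 2 * Real.cos (t*u) * Real.sin (((N:ℝ) + 1/2) * u) := by
    rw [show (t + N + 1/2) * u = t*u + ((N:ℝ) + 1/2)*u by ring,
        show (t - N - 1/2) * u = t*u - ((N:ℝ) + 1/2)*u by ring,
        Real.sin_add, Real.sin_sub]
    ring
  rw [eq_div_iff hu]
  linear_combination h / 2 + h2 / 2

lemma RL (f : ℝ → ℝ) (hf : MeasureTheory.Integrable f) :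
    Tendsto (fun lam : ℝ => ∫ x, f x * Real.sin (lam * x)) atTop (nhds 0) := by
  set F : ℝ → ℂ := fun x => (f x : ℂ) with hF
  have hFi : MeasureTheory.Integrable F := hf.ofReal
  have h0 : Tendsto (fun w : ℝ => FourierTransform.fourier F w) (cocompact ℝ) (nhds 0) :=
    Real.zero_at_infty_fourier F
  have hmap : Tendsto (fun lam : ℝ => -lam / (2 * Real.pi)) atTop (cocompact ℝ) := by
    refine Tendsto.mono_right ?_ _root_.atBot_le_cocompact
    have : Tendsto (fun lam : ℝ => lam / (2 * Real.pi)) atTop atBot → True := fun _ => trivial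
    apply Tendsto.atBot_div_const (by positivity)
    exact tendsto_neg_atTop_atBot.comp tendsto_id
  have h1 : Tendsto (fun lam : ℝ => FourierTransform.fourier F (-lam / (2 * Real.pi)))
      atTop (nhds 0) := h0.comp hmap
  have h2 : Tendsto (fun lam : ℝ => (FourierTransform.fourier F (-lam / (2 * Real.pi))).im)
      atTop (nhds 0) := by
    simpa [Function.comp_def] using (Complex.continuous_im.tendsto 0).comp h1
  refine h2.congr fun lam => ?_
  rw [Real.fourier_real_eq_integral_exp_smul]
  have hint : MeasureTheory.Integrable
      (fun v : ℝ => Complex.exp (↑(-2 * Real.pi * v * (-lam / (2 * Real.pi))) * Complex.I) • F v) := by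
    apply MeasureTheory.Integrable.mono' hFi.norm
    · exact (Complex.continuous_exp.comp (by continuity)).aestronglyMeasurable.smul
        hFi.aestronglyMeasurable
    · refine Filter.Eventually.of_forall fun v => ?_
      rw [norm_smul, Complex.norm_exp_ofReal_mul_I, one_mul]
  have := (Complex.imCLM.integral_comp_comm hint).symm
  simp only [Complex.imCLM_apply] at this
  rw [this]
  refine MeasureTheory.integral_congr_ae (Filter.Eventually.of_forall fun v => ?_)
  have harg : -2 * Real.pi * v * (-lam / (2 * Real.pi)) = lam * v := by
    field_simp
  simp only [harg, hF, Complex.exp_mul_I]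
  simp [Complex.mul_im, ← Complex.ofReal_mul, Complex.sin_ofReal_re, mul_comm]

lemma RLseq (a b : ℝ) (hab : a ≤ b) (g : ℝ → ℝ) (hg : MeasureTheory.IntegrableOn g (Set.Ioc a b)) :
    Tendsto (fun N : ℕ => ∫ u in a..b, g u * Real.sin (((N:ℝ) + 1/2) * u)) atTop (nhds 0) := by
  set f : ℝ → ℝ := Set.indicator (Set.Ioc a b) g with hf
  have hfi : MeasureTheory.Integrable f :=
    (MeasureTheory.integrable_indicator_iff measurableSet_Ioc).mpr hg
  have hN : Tendsto (fun N : ℕ => (N:ℝ) + 1/2) atTop atTop :=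
    Filter.tendsto_atTop_add_const_right _ _ tendsto_natCast_atTop_atTop
  have h := (RL f hfi).comp hN
  refine h.congr fun N => ?_
  show (∫ x, f x * Real.sin (((N:ℝ) + 1/2) * x)) = _
  have : ∀ x, f x * Real.sin (((N:ℝ) + 1/2) * x)
      = Set.indicator (Set.Ioc a b) (fun u => g u * Real.sin (((N:ℝ) + 1/2) * u)) x := by
    intro x
    rw [hf, Set.indicator_apply, Set.indicator_apply]
    split <;> simp
  rw [MeasureTheory.integral_congr_ae (Filter.Eventually.of_forall this),
    MeasureTheory.integral_indicator measurableSet_Ioc,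
    intervalIntegral.integral_of_le hab]

lemma sin_half_ne (u : ℝ) (h0 : 0 < u) (h1 : u ≤ π) : Real.sin (u/2) ≠ 0 :=
  ne_of_gt (Real.sin_pos_of_pos_of_lt_pi (by linarith)
    (by linarith [Real.pi_pos]))

theorem sinc_periodization_one (t : ℝ) :
    Filter.Tendsto (fun N : ℕ => ∑ p ∈ Finset.Icc (-(N : ℤ)) (N : ℤ), sinc (t + p))
      Filter.atTop (nhds Real.pi) := by
  set g1 : ℝ → ℝ := fun u => (Real.cos (t*u) - 1) / Real.sin (u/2) with hg1def
  set g2 : ℝ → ℝ := fun u => (Real.sin (u/2))⁻¹ with hg2def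
  have hπ1 : (1:ℝ) ≤ π := by linarith [Real.pi_gt_three]
  -- integrability of g1 on Ioc 0 1
  have hg1m : MeasureTheory.AEStronglyMeasurable g1 (volume : MeasureTheory.Measure ℝ) := by
    apply Measurable.aestronglyMeasurable
    exact ((Real.continuous_cos.comp (continuous_const.mul continuous_id)).sub
      continuous_const).measurable.div
      ((Real.continuous_sin.comp (continuous_id.div_const 2)).measurable)
  have hg1 : MeasureTheory.IntegrableOn g1 (Set.Ioc (0:ℝ) 1) := by
    have hbd : ∀ᵐ u ∂(volume.restrict (Set.Ioc (0:ℝ) 1)), ‖g1 u‖ ≤ π * t^2 / 2 := by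
      refine (MeasureTheory.ae_restrict_iff' measurableSet_Ioc).mpr
        (Filter.Eventually.of_forall fun u hu => ?_)
      obtain ⟨hu0, hu1⟩ := hu
      have hsp : 0 < Real.sin (u/2) :=
        Real.sin_pos_of_pos_of_lt_pi (by linarith) (by linarith [Real.pi_gt_three])
      have hsl : u / π ≤ Real.sin (u/2) := by
        have := Real.mul_le_sin (x := u/2) (by linarith) (by linarith [Real.pi_gt_three])
        calc u / π = 2 / π * (u/2) := by field_simp
        _ ≤ Real.sin (u/2) := this
      have hnum : |Real.cos (t*u) - 1| ≤ (t*u)^2 / 2 := by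
        rw [abs_sub_comm, abs_of_nonneg (by linarith [Real.cos_le_one (t*u)])]
        linarith [Real.one_sub_sq_div_two_le_cos (x := t*u)]
      have hup : 0 < u / π := div_pos hu0 Real.pi_pos
      calc ‖g1 u‖ = |Real.cos (t*u) - 1| / Real.sin (u/2) := by
            rw [hg1def]
            simp only [Real.norm_eq_abs, abs_div, abs_of_pos hsp]
        _ ≤ ((t*u)^2 / 2) / (u / π) := by
            apply div_le_div₀ (by positivity) hnum hup hsl
        _ = π * t^2 * u / 2 := by
            field_simp
        _ ≤ π * t^2 / 2 := by nlinarith [mul_nonneg (mul_nonneg Real.pi_pos.le (sq_nonneg t)) (by linarith : (0:ℝ) ≤ 1 - u)]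
    exact MeasureTheory.Measure.integrableOn_of_bounded (by simp) hg1m hbd
  -- integrability of g2 on Ioc 1 π
  have hg2 : MeasureTheory.IntegrableOn g2 (Set.Ioc (1:ℝ) π) := by
    apply MeasureTheory.IntegrableOn.mono_set _ Set.Ioc_subset_Icc_self
    apply ContinuousOn.integrableOn_Icc
    apply ContinuousOn.inv₀
    · exact (Real.continuous_sin.comp (continuous_id.div_const 2)).continuousOn
    · intro u hu
      exact sin_half_ne u (by linarith [hu.1]) hu.2
  -- the key decomposition
  have key : ∀ N : ℕ, (∑ p ∈ Finset.Icc (-(N:ℤ)) (N:ℤ), sinc (t + p))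
      = (∫ u in (0:ℝ)..1, g1 u * Real.sin (((N:ℝ) + 1/2) * u))
        - (∫ u in (1:ℝ)..π, g2 u * Real.sin (((N:ℝ) + 1/2) * u)) + π := by
    intro N
    have hc : ∀ (s : ℝ) (p : ℤ), Continuous fun u : ℝ => Real.cos ((s + p) * u) :=
      fun s p => Real.continuous_cos.comp (continuous_const.mul continuous_id)
    have hS : Continuous fun u : ℝ => ∑ p ∈ Finset.Icc (-(N:ℤ)) (N:ℤ), Real.cos ((t + p) * u) :=
      continuous_finset_sum _ fun p _ => hc t p
    have hS0 : Continuous fun u : ℝ => ∑ p ∈ Finset.Icc (-(N:ℤ)) (N:ℤ), Real.cos ((0 + p) * u) :=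
      continuous_finset_sum _ fun p _ => hc 0 p
    -- step 1
    have h1 : (∑ p ∈ Finset.Icc (-(N:ℤ)) (N:ℤ), sinc (t + p))
        = ∫ u in (0:ℝ)..1, ∑ p ∈ Finset.Icc (-(N:ℤ)) (N:ℤ), Real.cos ((t + p) * u) := by
      rw [intervalIntegral.integral_finset_sum
        (fun p _ => (hc t p).intervalIntegrable 0 1)]
      exact Finset.sum_congr rfl fun p _ => sinc_eq_integral (t + p)
    -- step: split off S0
    have h2 : (∫ u in (0:ℝ)..1, ∑ p ∈ Finset.Icc (-(N:ℤ)) (N:ℤ), Real.cos ((t + p) * u))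
        = (∫ u in (0:ℝ)..1, ((∑ p ∈ Finset.Icc (-(N:ℤ)) (N:ℤ), Real.cos ((t + p) * u))
            - ∑ p ∈ Finset.Icc (-(N:ℤ)) (N:ℤ), Real.cos ((0 + p) * u)))
          + ∫ u in (0:ℝ)..1, ∑ p ∈ Finset.Icc (-(N:ℤ)) (N:ℤ), Real.cos ((0 + p) * u) := by
      rw [← intervalIntegral.integral_add (show IntervalIntegrable (fun u => (∑ p ∈ Finset.Icc (-(N:ℤ)) (N:ℤ), Real.cos ((t + p) * u)) - ∑ p ∈ Finset.Icc (-(N:ℤ)) (N:ℤ), Real.cos ((0 + p) * u)) volume 0 1 from (hS.sub hS0).intervalIntegrable 0 1)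
        (hS0.intervalIntegrable 0 1)]
      simp
    -- step: first integral equals g1 integral
    have h3 : (∫ u in (0:ℝ)..1, ((∑ p ∈ Finset.Icc (-(N:ℤ)) (N:ℤ), Real.cos ((t + p) * u))
            - ∑ p ∈ Finset.Icc (-(N:ℤ)) (N:ℤ), Real.cos ((0 + p) * u)))
        = ∫ u in (0:ℝ)..1, g1 u * Real.sin (((N:ℝ) + 1/2) * u) := by
      apply intervalIntegral.integral_congr
      intro u hu
      dsimp only
      rw [Set.uIcc_of_le (by norm_num : (0:ℝ) ≤ 1)] at hu
      obtain ⟨hu0, hu1⟩ := hu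
      rcases eq_or_ne u 0 with rfl | hne
      · simp [hg1def]
      · have hs := sin_half_ne u (lt_of_le_of_ne hu0 (Ne.symm hne)) (by linarith)
        rw [kernel t u N hs, kernel 0 u N hs, hg1def]
        simp only [zero_mul, Real.cos_zero]
        field_simp
    -- step: adjacent intervals for S0
    have h4 : (∫ u in (0:ℝ)..1, ∑ p ∈ Finset.Icc (-(N:ℤ)) (N:ℤ), Real.cos ((0 + p) * u))
        = (∫ u in (0:ℝ)..π, ∑ p ∈ Finset.Icc (-(N:ℤ)) (N:ℤ), Real.cos ((0 + p) * u))
          - ∫ u in (1:ℝ)..π, ∑ p ∈ Finset.Icc (-(N:ℤ)) (N:ℤ), Real.cos ((0 + p) * u) := by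
      rw [← intervalIntegral.integral_add_adjacent_intervals
        (hS0.intervalIntegrable 0 1) (hS0.intervalIntegrable 1 π)]
      ring
    -- step: integral of S0 over 0..π is π
    have h5 : (∫ u in (0:ℝ)..π, ∑ p ∈ Finset.Icc (-(N:ℤ)) (N:ℤ), Real.cos ((0 + p) * u)) = π := by
      rw [intervalIntegral.integral_finset_sum
        (fun p _ => (hc 0 p).intervalIntegrable 0 π)]
      have hterm : ∀ p ∈ Finset.Icc (-(N:ℤ)) (N:ℤ),
          (∫ u in (0:ℝ)..π, Real.cos ((0 + (p:ℝ)) * u)) = if p = 0 then π else 0 := by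
        intro p _
        rcases eq_or_ne p 0 with rfl | hp
        · simp
        · have hpc : ((p:ℝ)) ≠ 0 := Int.cast_ne_zero.mpr hp
          rw [if_neg hp]
          simp only [zero_add]
          rw [intervalIntegral.integral_comp_mul_left Real.cos hpc]
          simp [Real.sin_int_mul_pi]
      rw [Finset.sum_congr rfl hterm, Finset.sum_ite_eq' _ (0:ℤ)]
      simp
    -- step: S0 over 1..π equals g2 integral
    have h6 : (∫ u in (1:ℝ)..π, ∑ p ∈ Finset.Icc (-(N:ℤ)) (N:ℤ), Real.cos ((0 + p) * u))
        = ∫ u in (1:ℝ)..π, g2 u * Real.sin (((N:ℝ) + 1/2) * u) := by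
      apply intervalIntegral.integral_congr
      intro u hu
      dsimp only
      rw [Set.uIcc_of_le hπ1] at hu
      have hs := sin_half_ne u (by linarith [hu.1]) hu.2
      rw [kernel 0 u N hs, hg2def]
      simp only [zero_mul, Real.cos_zero, one_mul]
      field_simp
    rw [h1, h2, h3, h4, h5, h6]
    ring
  -- conclude
  have hA := RLseq 0 1 (by norm_num) g1 hg1
  have hB := RLseq 1 π hπ1 g2 hg2
  have h := (hA.sub hB).add_const π
  norm_num at h
  exact h.congr fun N => (key N).symm
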